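/- There exists a constant c > 0 such that for every m ≥ 2, every retraction of the m×m grid graph to its boundary cycle has stretch at least c·m. (For the √n × √n grid on n vertices, the paper's bound is 2√n/3; in particular the optimal stretch is Ω(√n), even though the distance-based lower bound max_{u,v} d_H(u,v)/d_G(u,v) is O(1) for this instance.) -/

import Mathlib

/-- The `m × m` grid graph on `Fin m × Fin m`: two vertices are adjacent iff they agree
in one coordinate and differ by exactly 1 in the other. -/
def gridGraph (m : ℕ) : SimpleGraph (Fin m × Fin m) :=
  SimpleGraph.fromRel (fun u v =>
    (u.1 = v.1 ∧ u.2.val + 1 = v.2.val) ∨ (u.2 = v.2 ∧ u.1.val + 1 = v.1.val))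

/-- The boundary of the `m × m` grid: the subgraph induced on the vertices having some
coordinate equal to `0` or `m − 1` (a cycle on `4(m−1)` vertices). -/
def gridBoundary (m : ℕ) : (gridGraph m).Subgraph :=
  (⊤ : (gridGraph m).Subgraph).induce
    {v | v.1.val = 0 ∨ v.1.val = m - 1 ∨ v.2.val = 0 ∨ v.2.val = m - 1}

namespace GridRetr

/-- cycle length -/
def L (m : ℕ) : ℕ := 4*(m-1)

/-- integer position of a boundary vertex along the cycle -/
def posZ (m : ℕ) (v : Fin m × Fin m) : ℤ :=
  if v.1.val = 0 then (v.2.val : ℤ)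
  else if v.2.val = m-1 then (m:ℤ)-1 + v.1.val
  else if v.1.val = m-1 then 3*((m:ℤ)-1) - v.2.val
  else 4*((m:ℤ)-1) - v.1.val

def pos (m : ℕ) (v : Fin m × Fin m) : ZMod (L m) := ((posZ m v : ℤ) : ZMod (L m))

lemma mem_bdry {m : ℕ} {v : Fin m × Fin m} :
    v ∈ (gridBoundary m).verts ↔ (v.1.val = 0 ∨ v.1.val = m - 1 ∨ v.2.val = 0 ∨ v.2.val = m - 1) := by
  rfl

lemma grid_adj {m : ℕ} {u v : Fin m × Fin m} :
    (gridGraph m).Adj u v ↔ u ≠ v ∧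
      (((u.1 = v.1 ∧ u.2.val + 1 = v.2.val) ∨ (u.2 = v.2 ∧ u.1.val + 1 = v.1.val)) ∨
       ((v.1 = u.1 ∧ v.2.val + 1 = u.2.val) ∨ (v.2 = u.2 ∧ v.1.val + 1 = u.1.val))) := by
  simp [gridGraph, SimpleGraph.fromRel_adj]

lemma bdry_adj {m : ℕ} {u v : Fin m × Fin m}
    (hu : u ∈ (gridBoundary m).verts) (hv : v ∈ (gridBoundary m).verts)
    (h : (gridGraph m).Adj u v) : (gridBoundary m).Adj u v := by
  simp only [gridBoundary, SimpleGraph.Subgraph.induce_adj, SimpleGraph.Subgraph.top_adj]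
  exact ⟨hu, hv, h⟩

lemma bdry_adj' {m : ℕ} {u v : Fin m × Fin m} (h : (gridBoundary m).Adj u v) :
    u ∈ (gridBoundary m).verts ∧ v ∈ (gridBoundary m).verts ∧ (gridGraph m).Adj u v := by
  simp only [gridBoundary, SimpleGraph.Subgraph.induce_adj, SimpleGraph.Subgraph.top_adj] at h
  exact h

/-- one-directional step lemma in ℤ -/
lemma posZ_step1 {m : ℕ} (hm : 3 ≤ m) {u v : Fin m × Fin m}
    (hu : u ∈ (gridBoundary m).verts) (hv : v ∈ (gridBoundary m).verts)
    (h : (u.1 = v.1 ∧ u.2.val + 1 = v.2.val) ∨ (u.2 = v.2 ∧ u.1.val + 1 = v.1.val)) :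
    posZ m v - posZ m u = 1 ∨ posZ m v - posZ m u = -1 ∨
      posZ m v - posZ m u = 4*((m:ℤ)-1) - 1 := by
  obtain ⟨⟨a, ha⟩, ⟨b, hb⟩⟩ := u
  obtain ⟨⟨c, hc⟩, ⟨d, hd⟩⟩ := v
  rw [mem_bdry] at hu hv
  simp only [Fin.mk.injEq, Prod.mk.injEq, Fin.ext_iff] at h hu hv ⊢
  simp only [posZ]
  split_ifs <;> omega

end GridRetr

namespace GridRetr

lemma castL {m : ℕ} (hm : 3 ≤ m) (x : ℤ) :
    ((x + 4*((m:ℤ)-1) : ℤ) : ZMod (L m)) = ((x : ℤ) : ZMod (L m)) := by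
  have h : (x + 4*((m:ℤ)-1) : ℤ) = x + ((L m : ℕ) : ℤ) := by
    simp only [L]; push_cast; omega
  rw [h]
  push_cast
  simp

/-- adjacency step on boundary: pos changes by ±1 -/
lemma pos_step {m : ℕ} (hm : 3 ≤ m) {u v : Fin m × Fin m}
    (hu : u ∈ (gridBoundary m).verts) (hv : v ∈ (gridBoundary m).verts)
    (h : (gridGraph m).Adj u v) :
    pos m v - pos m u = 1 ∨ pos m v - pos m u = -1 := by
  have hps : pos m v - pos m u = ((posZ m v - posZ m u : ℤ) : ZMod (L m)) := by
    simp [pos]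
  rw [grid_adj] at h
  rcases h.2 with h1 | h1
  · rcases posZ_step1 hm hu hv h1 with h2 | h2 | h2 <;> rw [hps, h2]
    · left; simp
    · right; simp
    · right
      rw [show (4*((m:ℤ)-1) - 1 : ℤ) = -1 + 4*((m:ℤ)-1) by ring, castL hm]
      simp
  · rcases posZ_step1 hm hv hu h1 with h2 | h2 | h2 <;>
      rw [hps, show posZ m v - posZ m u = -(posZ m u - posZ m v) by ring, h2]
    · right; simp
    · left; simp
    · left
      have h3 := castL hm (1 - 4*((m:ℤ)-1))
      rw [show ((1 - 4*((m:ℤ)-1)) + 4*((m:ℤ)-1) : ℤ) = (1:ℤ) by ring] at h3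
      rw [show (-(4*((m:ℤ)-1) - 1) : ℤ) = 1 - 4*((m:ℤ)-1) by ring, ← h3]
      simp

-- four directed boundary computations (ℤ level)
lemma posZ_top {m : ℕ} (hm : 3 ≤ m) {b : ℕ} (hb : b + 1 < m) (h0 : 0 < m) :
    posZ m (⟨0,h0⟩, ⟨b+1, hb⟩) - posZ m (⟨0,h0⟩, ⟨b, by omega⟩) = 1 := by
  simp only [posZ]; split_ifs <;> first | omega | (simp_all; try omega)

lemma posZ_right {m : ℕ} (hm : 3 ≤ m) {a : ℕ} (ha : a + 1 < m) (h0 : m-1 < m) :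
    posZ m (⟨a+1,ha⟩, ⟨m-1, h0⟩) - posZ m (⟨a, by omega⟩, ⟨m-1, h0⟩) = 1 := by
  simp only [posZ]; split_ifs <;> first | omega | (simp_all; try omega)

lemma posZ_bot {m : ℕ} (hm : 3 ≤ m) {b : ℕ} (hb : b + 1 < m) (h0 : m-1 < m) :
    posZ m (⟨m-1,h0⟩, ⟨b+1, hb⟩) - posZ m (⟨m-1,h0⟩, ⟨b, by omega⟩) = -1 := by
  simp only [posZ]; split_ifs <;> first | omega | (simp_all; try omega)

lemma posZ_left {m : ℕ} (hm : 3 ≤ m) {a : ℕ} (ha : a + 1 < m) (h0 : 0 < m) :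
    posZ m (⟨a+1,ha⟩, ⟨0, h0⟩) - posZ m (⟨a, by omega⟩, ⟨0, h0⟩) = -1 ∨
    posZ m (⟨a+1,ha⟩, ⟨0, h0⟩) - posZ m (⟨a, by omega⟩, ⟨0, h0⟩) = -1 + 4*((m:ℤ)-1) := by
  simp only [posZ]; split_ifs <;> first | omega | (simp_all; try omega)

end GridRetr

namespace GridRetr

lemma adj_right {m : ℕ} {i j : ℕ} (hi : i < m) (hj : j + 1 < m) :
    (gridGraph m).Adj (⟨i,hi⟩, ⟨j, by omega⟩) (⟨i,hi⟩, ⟨j+1, hj⟩) := by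
  rw [grid_adj]
  refine ⟨?_, Or.inl (Or.inl ⟨rfl, rfl⟩)⟩
  simp only [ne_eq, Prod.mk.injEq, Fin.mk.injEq, not_and]
  omega

lemma adj_down {m : ℕ} {i j : ℕ} (hi : i + 1 < m) (hj : j < m) :
    (gridGraph m).Adj (⟨i, by omega⟩, ⟨j,hj⟩) (⟨i+1,hi⟩, ⟨j, hj⟩) := by
  rw [grid_adj]
  refine ⟨?_, Or.inl (Or.inr ⟨rfl, rfl⟩)⟩
  simp only [ne_eq, Prod.mk.injEq, Fin.mk.injEq, not_and]
  omega

lemma coe_adj_of {m : ℕ} {u v : ↥(gridBoundary m).verts}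
    (h : (gridGraph m).Adj u.1 v.1) : (gridBoundary m).coe.Adj u v := by
  rw [SimpleGraph.Subgraph.coe_adj]
  exact bdry_adj u.2 v.2 h

def c00 {m : ℕ} (hm : 0 < m) : ↥(gridBoundary m).verts :=
  ⟨(⟨0,hm⟩, ⟨0,hm⟩), Or.inl rfl⟩

lemma r_top {m : ℕ} (hm : 0 < m) :
    ∀ j (hj : j < m), (gridBoundary m).coe.Reachable ⟨(⟨0,hm⟩, ⟨j,hj⟩), Or.inl rfl⟩ (c00 hm) := by
  intro j
  induction j with
  | zero => intro hj; exact SimpleGraph.Reachable.refl _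
  | succ j ih =>
    intro hj
    refine SimpleGraph.Reachable.trans ?_ (ih (by omega))
    exact SimpleGraph.Adj.reachable (coe_adj_of (adj_right hm hj)).symm

lemma r_left {m : ℕ} (hm : 0 < m) :
    ∀ i (hi : i < m), (gridBoundary m).coe.Reachable ⟨(⟨i,hi⟩, ⟨0,hm⟩), Or.inr (Or.inr (Or.inl rfl))⟩ (c00 hm) := by
  intro i
  induction i with
  | zero => intro hi; exact SimpleGraph.Reachable.refl _
  | succ i ih =>
    intro hi
    refine SimpleGraph.Reachable.trans ?_ (ih (by omega))
    exact SimpleGraph.Adj.reachable (coe_adj_of (adj_down hi hm)).symm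

lemma r_bot {m : ℕ} (hm : 0 < m) (hm1 : m - 1 < m) :
    ∀ j (hj : j < m), (gridBoundary m).coe.Reachable ⟨(⟨m-1,hm1⟩, ⟨j,hj⟩), Or.inr (Or.inl rfl)⟩ (c00 hm) := by
  intro j
  induction j with
  | zero => intro hj; exact r_left hm (m-1) hm1
  | succ j ih =>
    intro hj
    refine SimpleGraph.Reachable.trans ?_ (ih (by omega))
    exact SimpleGraph.Adj.reachable (coe_adj_of (adj_right hm1 hj)).symm

lemma r_right {m : ℕ} (hm : 0 < m) (hm1 : m - 1 < m) :
    ∀ i (hi : i < m), (gridBoundary m).coe.Reachable ⟨(⟨i,hi⟩, ⟨m-1,hm1⟩), Or.inr (Or.inr (Or.inr rfl))⟩ (c00 hm) := by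
  intro i
  induction i with
  | zero => intro hi; exact r_top hm (m-1) hm1
  | succ i ih =>
    intro hi
    refine SimpleGraph.Reachable.trans ?_ (ih (by omega))
    exact SimpleGraph.Adj.reachable (coe_adj_of (adj_down hi hm1)).symm

lemma reach_all {m : ℕ} (hm : 0 < m) (x : ↥(gridBoundary m).verts) :
    (gridBoundary m).coe.Reachable x (c00 hm) := by
  obtain ⟨⟨⟨a, ha⟩, ⟨b, hb⟩⟩, hmem⟩ := x
  rcases hmem with h | h | h | h
  · have h' : a = 0 := h
    subst h'
    exact r_top hm b hb
  · have h' : a = m - 1 := h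
    subst h'
    exact r_bot hm ha b hb
  · have h' : b = 0 := h
    subst h'
    exact r_left hm a ha
  · have h' : b = m - 1 := h
    subst h'
    exact r_right hm hb a ha

end GridRetr

namespace GridRetr

variable {m : ℕ} (f : Fin m × Fin m → ↥(gridBoundary m).verts)

noncomputable def D (u v : Fin m × Fin m) : ℤ :=
  open Classical in
  if h : ∃ δ : ℤ, |δ| ≤ (m:ℤ)-2 ∧ ((δ : ZMod (L m)) = pos m (f v).1 - pos m (f u).1)
  then h.choose else 0

lemma walk_delta (hm : 3 ≤ m) {x y : ↥(gridBoundary m).verts}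
    (W : (gridBoundary m).coe.Walk x y) :
    ∃ δ : ℤ, |δ| ≤ (W.length : ℤ) ∧ ((δ : ZMod (L m)) = pos m y.1 - pos m x.1) := by
  induction W with
  | nil => exact ⟨0, by simp, by simp⟩
  | @cons a z y h W ih =>
    obtain ⟨δ, h1, h2⟩ := ih
    rw [SimpleGraph.Subgraph.coe_adj] at h
    obtain ⟨ha, hz, hadj⟩ := bdry_adj' h
    have hst := pos_step hm ha hz hadj
    rcases hst with hε | hε
    · refine ⟨1 + δ, ?_, ?_⟩
      · rw [SimpleGraph.Walk.length_cons]
        push_cast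
        have := abs_add_le (1:ℤ) δ
        simp only [abs_one] at this
        omega
      · push_cast
        rw [h2, ← hε]
        ring
    · refine ⟨-1 + δ, ?_, ?_⟩
      · rw [SimpleGraph.Walk.length_cons]
        push_cast
        have := abs_add_le (-1:ℤ) δ
        simp only [abs_neg, abs_one] at this
        omega
      · push_cast
        rw [h2]
        rw [show ((-1 : ZMod (L m))) = pos m z.1 - pos m a.1 from hε.symm]
        ring
  termination_by W.length
  decreasing_by simp [SimpleGraph.Walk.length_cons]

end GridRetr

namespace GridRetr

variable {m : ℕ} (f : Fin m × Fin m → ↥(gridBoundary m).verts)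


lemma exists_delta (hm : 3 ≤ m)
    (hs : ∀ u v : Fin m × Fin m, (gridGraph m).Adj u v →
      (gridBoundary m).coe.dist (f u) (f v) ≤ m - 2)
    {u v : Fin m × Fin m} (h : (gridGraph m).Adj u v) :
    ∃ δ : ℤ, |δ| ≤ (m:ℤ)-2 ∧ ((δ : ZMod (L m)) = pos m (f v).1 - pos m (f u).1) := by
  have hr : (gridBoundary m).coe.Reachable (f u) (f v) :=
    (reach_all (by omega) (f u)).trans (reach_all (by omega) (f v)).symm
  obtain ⟨W, hW⟩ := hr.exists_walk_length_eq_dist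
  obtain ⟨δ, h1, h2⟩ := walk_delta hm W
  refine ⟨δ, ?_, h2⟩
  have h3 := hs u v h
  rw [hW] at h1
  have h4 : ((gridBoundary m).coe.dist (f u) (f v) : ℤ) ≤ (m:ℤ) - 2 := by
    omega
  omega

lemma D_spec (hm : 3 ≤ m)
    (hs : ∀ u v : Fin m × Fin m, (gridGraph m).Adj u v →
      (gridBoundary m).coe.dist (f u) (f v) ≤ m - 2)
    {u v : Fin m × Fin m} (h : (gridGraph m).Adj u v) :
    |D f u v| ≤ (m:ℤ)-2 ∧ ((D f u v : ZMod (L m)) = pos m (f v).1 - pos m (f u).1) := by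
  have hex := exists_delta f hm hs h
  rw [D, dif_pos hex]
  exact hex.choose_spec

lemma D_eq (hm : 3 ≤ m)
    (hs : ∀ u v : Fin m × Fin m, (gridGraph m).Adj u v →
      (gridBoundary m).coe.dist (f u) (f v) ≤ m - 2)
    {u v : Fin m × Fin m} (h : (gridGraph m).Adj u v)
    {δ : ℤ} (hδ1 : |δ| ≤ (m:ℤ)-2)
    (hδ2 : (δ : ZMod (L m)) = pos m (f v).1 - pos m (f u).1) :
    D f u v = δ := by
  obtain ⟨ha, hb⟩ := D_spec f hm hs h
  have hc : ((D f u v - δ : ℤ) : ZMod (L m)) = 0 := by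
    push_cast
    rw [hb, hδ2]
    ring
  have hdvd : ((L m : ℕ) : ℤ) ∣ (D f u v - δ) := by
    rwa [ZMod.intCast_zmod_eq_zero_iff_dvd] at hc
  have hL : ((L m : ℕ) : ℤ) = 4*(m:ℤ) - 4 := by
    simp only [L]; omega
  rw [hL] at hdvd
  have h1 := abs_le.mp ha
  have h2 := abs_le.mp hδ1
  have h3 : D f u v - δ = 0 := by
    refine Int.eq_zero_of_abs_lt_dvd hdvd ?_
    rw [abs_lt]
    omega
  omega

end GridRetr

namespace GridRetr

variable {m : ℕ} (f : Fin m × Fin m → ↥(gridBoundary m).verts)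

def vv (m : ℕ) (hm0 : 0 < m) (i j : ℕ) : Fin m × Fin m :=
  (⟨i % m, Nat.mod_lt _ hm0⟩, ⟨j % m, Nat.mod_lt _ hm0⟩)

lemma vv_eq {m : ℕ} (hm0 : 0 < m) {i j : ℕ} (hi : i < m) (hj : j < m) :
    vv m hm0 i j = (⟨i, hi⟩, ⟨j, hj⟩) := by
  simp [vv, Nat.mod_eq_of_lt hi, Nat.mod_eq_of_lt hj]

lemma adj_vv_h {m : ℕ} (hm0 : 0 < m) {i j : ℕ} (hi : i < m) (hj : j + 1 < m) :
    (gridGraph m).Adj (vv m hm0 i j) (vv m hm0 i (j+1)) := by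
  rw [vv_eq hm0 hi (by omega), vv_eq hm0 hi hj]
  exact adj_right hi hj

lemma adj_vv_v {m : ℕ} (hm0 : 0 < m) {i j : ℕ} (hi : i + 1 < m) (hj : j < m) :
    (gridGraph m).Adj (vv m hm0 i j) (vv m hm0 (i+1) j) := by
  rw [vv_eq hm0 (by omega) hj, vv_eq hm0 hi hj]
  exact adj_down hi hj

lemma square (hm : 3 ≤ m)
    (hs : ∀ u v : Fin m × Fin m, (gridGraph m).Adj u v →
      (gridBoundary m).coe.dist (f u) (f v) ≤ m - 2)
    {i j : ℕ} (hi : i + 1 < m) (hj : j + 1 < m) (hm0 : 0 < m) :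
    D f (vv m hm0 i j) (vv m hm0 i (j+1)) +
      D f (vv m hm0 i (j+1)) (vv m hm0 (i+1) (j+1)) =
    D f (vv m hm0 i j) (vv m hm0 (i+1) j) +
      D f (vv m hm0 (i+1) j) (vv m hm0 (i+1) (j+1)) := by
  have s1 := D_spec f hm hs (adj_vv_h hm0 (by omega : i < m) hj)
  have s2 := D_spec f hm hs (adj_vv_v hm0 hi (by omega : j + 1 < m))
  have s3 := D_spec f hm hs (adj_vv_v hm0 hi (by omega : j < m))
  have s4 := D_spec f hm hs (adj_vv_h hm0 (by omega : i + 1 < m) hj)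
  set A := D f (vv m hm0 i j) (vv m hm0 i (j+1)) with hA
  set B := D f (vv m hm0 i (j+1)) (vv m hm0 (i+1) (j+1)) with hB
  set C := D f (vv m hm0 i j) (vv m hm0 (i+1) j) with hC
  set E := D f (vv m hm0 (i+1) j) (vv m hm0 (i+1) (j+1)) with hE
  have hc : (((A + B) - (C + E) : ℤ) : ZMod (L m)) = 0 := by
    push_cast
    rw [s1.2, s2.2, s3.2, s4.2]
    ring
  have hdvd : ((L m : ℕ) : ℤ) ∣ ((A + B) - (C + E)) := by
    rwa [ZMod.intCast_zmod_eq_zero_iff_dvd] at hc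
  have hL : ((L m : ℕ) : ℤ) = 4*(m:ℤ) - 4 := by
    simp only [L]; omega
  rw [hL] at hdvd
  have h1 := abs_le.mp s1.1
  have h2 := abs_le.mp s2.1
  have h3 := abs_le.mp s3.1
  have h4 := abs_le.mp s4.1
  have h5 : (A + B) - (C + E) = 0 := by
    refine Int.eq_zero_of_abs_lt_dvd hdvd ?_
    rw [abs_lt]
    omega
  omega

noncomputable def Hrow (hm0 : 0 < m) (i : ℕ) : ℤ :=
  ∑ j ∈ Finset.range (m-1), D f (vv m hm0 i j) (vv m hm0 i (j+1))

noncomputable def Vcol (hm0 : 0 < m) (i j : ℕ) : ℤ :=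
  D f (vv m hm0 i j) (vv m hm0 (i+1) j)

lemma row_step (hm : 3 ≤ m)
    (hs : ∀ u v : Fin m × Fin m, (gridGraph m).Adj u v →
      (gridBoundary m).coe.dist (f u) (f v) ≤ m - 2)
    {i : ℕ} (hi : i + 1 < m) (hm0 : 0 < m) :
    Hrow f hm0 (i+1) = Hrow f hm0 i + (Vcol f hm0 i (m-1) - Vcol f hm0 i 0) := by
  have key : ∀ j ∈ Finset.range (m-1),
      D f (vv m hm0 (i+1) j) (vv m hm0 (i+1) (j+1)) =
        D f (vv m hm0 i j) (vv m hm0 i (j+1)) + (Vcol f hm0 i (j+1) - Vcol f hm0 i j) := by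
    intro j hj
    rw [Finset.mem_range] at hj
    have := square f hm hs hi (show j + 1 < m by omega) hm0
    simp only [Vcol]
    omega
  rw [Hrow, Finset.sum_congr rfl key, Finset.sum_add_distrib,
    Finset.sum_range_sub (fun j => Vcol f hm0 i j)]
  rfl

lemma total (hm : 3 ≤ m)
    (hs : ∀ u v : Fin m × Fin m, (gridGraph m).Adj u v →
      (gridBoundary m).coe.dist (f u) (f v) ≤ m - 2) (hm0 : 0 < m) :
    Hrow f hm0 (m-1) = Hrow f hm0 0 +
      ∑ i ∈ Finset.range (m-1), (Vcol f hm0 i (m-1) - Vcol f hm0 i 0) := by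
  have t := Finset.sum_range_sub (Hrow f hm0) (m-1)
  have key : ∀ i ∈ Finset.range (m-1),
      Hrow f hm0 (i+1) - Hrow f hm0 i = Vcol f hm0 i (m-1) - Vcol f hm0 i 0 := by
    intro i hi
    rw [Finset.mem_range] at hi
    rw [row_step f hm hs (by omega) hm0]
    ring
  rw [Finset.sum_congr rfl key] at t
  omega

end GridRetr

namespace GridRetr

variable {m : ℕ} (f : Fin m × Fin m → ↥(gridBoundary m).verts)

lemma f_fix (hf : ∀ a : ↥(gridBoundary m).verts, f (a : Fin m × Fin m) = a)
    {x : Fin m × Fin m} (hx : x ∈ (gridBoundary m).verts) :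
    ((f x) : Fin m × Fin m) = x :=
  congrArg Subtype.val (hf ⟨x, hx⟩)

lemma pos_sub {m : ℕ} (u v : Fin m × Fin m) :
    pos m v - pos m u = ((posZ m v - posZ m u : ℤ) : ZMod (L m)) := by
  simp [pos]

lemma term_top (hm : 3 ≤ m)
    (hf : ∀ a : ↥(gridBoundary m).verts, f (a : Fin m × Fin m) = a)
    (hs : ∀ u v : Fin m × Fin m, (gridGraph m).Adj u v →
      (gridBoundary m).coe.dist (f u) (f v) ≤ m - 2)
    (hm0 : 0 < m) {j : ℕ} (hj : j + 1 < m) :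
    D f (vv m hm0 0 j) (vv m hm0 0 (j+1)) = 1 := by
  rw [vv_eq hm0 hm0 (by omega), vv_eq hm0 hm0 hj]
  refine D_eq f hm hs (adj_right hm0 hj) (by rw [abs_one]; omega) ?_
  rw [f_fix f hf (Or.inl rfl), f_fix f hf (Or.inl rfl), pos_sub]
  have hd : posZ m ((⟨0,hm0⟩ : Fin m), (⟨j+1,hj⟩ : Fin m)) -
      posZ m ((⟨0,hm0⟩ : Fin m), (⟨j, by omega⟩ : Fin m)) = 1 := posZ_top hm hj hm0
  rw [hd]

lemma term_bot (hm : 3 ≤ m)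
    (hf : ∀ a : ↥(gridBoundary m).verts, f (a : Fin m × Fin m) = a)
    (hs : ∀ u v : Fin m × Fin m, (gridGraph m).Adj u v →
      (gridBoundary m).coe.dist (f u) (f v) ≤ m - 2)
    (hm0 : 0 < m) {j : ℕ} (hj : j + 1 < m) :
    D f (vv m hm0 (m-1) j) (vv m hm0 (m-1) (j+1)) = -1 := by
  have hm1 : m - 1 < m := by omega
  rw [vv_eq hm0 hm1 (by omega), vv_eq hm0 hm1 hj]
  refine D_eq f hm hs (adj_right hm1 hj) (by rw [abs_neg, abs_one]; omega) ?_
  rw [f_fix f hf (Or.inr (Or.inl rfl)), f_fix f hf (Or.inr (Or.inl rfl)), pos_sub]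
  have hd : posZ m ((⟨m-1,hm1⟩ : Fin m), (⟨j+1,hj⟩ : Fin m)) -
      posZ m ((⟨m-1,hm1⟩ : Fin m), (⟨j, by omega⟩ : Fin m)) = -1 := posZ_bot hm hj hm1
  rw [hd]

lemma term_right (hm : 3 ≤ m)
    (hf : ∀ a : ↥(gridBoundary m).verts, f (a : Fin m × Fin m) = a)
    (hs : ∀ u v : Fin m × Fin m, (gridGraph m).Adj u v →
      (gridBoundary m).coe.dist (f u) (f v) ≤ m - 2)
    (hm0 : 0 < m) {i : ℕ} (hi : i + 1 < m) :
    D f (vv m hm0 i (m-1)) (vv m hm0 (i+1) (m-1)) = 1 := by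
  have hm1 : m - 1 < m := by omega
  rw [vv_eq hm0 (by omega) hm1, vv_eq hm0 hi hm1]
  refine D_eq f hm hs (adj_down hi hm1) (by rw [abs_one]; omega) ?_
  rw [f_fix f hf (Or.inr (Or.inr (Or.inr rfl))), f_fix f hf (Or.inr (Or.inr (Or.inr rfl))), pos_sub]
  have hd : posZ m ((⟨i+1,hi⟩ : Fin m), (⟨m-1,hm1⟩ : Fin m)) -
      posZ m ((⟨i, by omega⟩ : Fin m), (⟨m-1,hm1⟩ : Fin m)) = 1 := posZ_right hm hi hm1
  rw [hd]

lemma term_left (hm : 3 ≤ m)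
    (hf : ∀ a : ↥(gridBoundary m).verts, f (a : Fin m × Fin m) = a)
    (hs : ∀ u v : Fin m × Fin m, (gridGraph m).Adj u v →
      (gridBoundary m).coe.dist (f u) (f v) ≤ m - 2)
    (hm0 : 0 < m) {i : ℕ} (hi : i + 1 < m) :
    D f (vv m hm0 i 0) (vv m hm0 (i+1) 0) = -1 := by
  rw [vv_eq hm0 (by omega) hm0, vv_eq hm0 hi hm0]
  refine D_eq f hm hs (adj_down hi hm0) (by rw [abs_neg, abs_one]; omega) ?_
  rw [f_fix f hf (Or.inr (Or.inr (Or.inl rfl))), f_fix f hf (Or.inr (Or.inr (Or.inl rfl))), pos_sub]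
  have hd := posZ_left hm hi hm0
  rcases hd with hd | hd
  · have hd' : posZ m ((⟨i+1,hi⟩ : Fin m), (⟨0,hm0⟩ : Fin m)) -
        posZ m ((⟨i, by omega⟩ : Fin m), (⟨0,hm0⟩ : Fin m)) = -1 := hd
    rw [hd']
  · have hd' : posZ m ((⟨i+1,hi⟩ : Fin m), (⟨0,hm0⟩ : Fin m)) -
        posZ m ((⟨i, by omega⟩ : Fin m), (⟨0,hm0⟩ : Fin m)) = -1 + 4*((m:ℤ)-1) := hd
    rw [hd', castL hm (-1)]

lemma main_contra (hm : 3 ≤ m)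
    (hf : ∀ a : ↥(gridBoundary m).verts, f (a : Fin m × Fin m) = a)
    (hs : ∀ u v : Fin m × Fin m, (gridGraph m).Adj u v →
      (gridBoundary m).coe.dist (f u) (f v) ≤ m - 2) : False := by
  have hm0 : 0 < m := by omega
  have e1 : Hrow f hm0 0 = ((m-1 : ℕ) : ℤ) := by
    rw [Hrow, Finset.sum_congr rfl (fun j hj =>
      term_top f hm hf hs hm0 (by rw [Finset.mem_range] at hj; omega))]
    simp
  have e2 : Hrow f hm0 (m-1) = -((m-1 : ℕ) : ℤ) := by
    rw [Hrow, Finset.sum_congr rfl (fun j hj =>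
      term_bot f hm hf hs hm0 (by rw [Finset.mem_range] at hj; omega))]
    simp
  have e3 : ∀ i ∈ Finset.range (m-1),
      Vcol f hm0 i (m-1) - Vcol f hm0 i 0 = 2 := by
    intro i hi
    rw [Finset.mem_range] at hi
    rw [Vcol, Vcol, term_right f hm hf hs hm0 (by omega),
      term_left f hm hf hs hm0 (by omega)]
    ring
  have t := total f hm hs hm0
  rw [Finset.sum_congr rfl e3, e1, e2, Finset.sum_const, Finset.card_range,
    nsmul_eq_mul] at t
  omega

end GridRetr


/-- There is a constant `c > 0` such that for all `m ≥ 2`, every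
retraction of the `m × m` grid graph to its boundary cycle has stretch at least `c·m`:
some edge of the grid is mapped to two boundary vertices at boundary distance
at least `c·m`. -/
theorem grid_retraction_lower_bound :
    ∃ c : ℝ, 0 < c ∧
      ∀ m : ℕ, 2 ≤ m →
        ∀ f : Fin m × Fin m → (gridBoundary m).verts,
          (∀ a : (gridBoundary m).verts, f (a : Fin m × Fin m) = a) →
          ∃ u v : Fin m × Fin m, (gridGraph m).Adj u v ∧
            c * (m : ℝ) ≤ ((gridBoundary m).coe.dist (f u) (f v) : ℝ) := by
  refine ⟨1/2, by norm_num, ?_⟩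
  intro m hm f hf
  rcases Nat.lt_or_ge m 3 with h3 | h3
  · -- m = 2
    have hm2 : m = 2 := by omega
    subst hm2
    have h0 : (0:ℕ) < 2 := by norm_num
    have h1 : (1:ℕ) < 2 := by norm_num
    set u : Fin 2 × Fin 2 := (⟨0,h0⟩, ⟨0,h0⟩) with hu
    set v : Fin 2 × Fin 2 := (⟨0,h0⟩, ⟨1,h1⟩) with hv
    have hadj : (gridGraph 2).Adj u v := GridRetr.adj_right h0 h1
    refine ⟨u, v, hadj, ?_⟩
    have hmu : u ∈ (gridBoundary 2).verts := Or.inl rfl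
    have hmv : v ∈ (gridBoundary 2).verts := Or.inl rfl
    have hfu : f u = ⟨u, hmu⟩ := hf ⟨u, hmu⟩
    have hfv : f v = ⟨v, hmv⟩ := hf ⟨v, hmv⟩
    rw [hfu, hfv]
    have hdist : (gridBoundary 2).coe.dist ⟨u, hmu⟩ ⟨v, hmv⟩ = 1 :=
      SimpleGraph.dist_eq_one_iff_adj.mpr (GridRetr.coe_adj_of hadj)
    rw [hdist]
    norm_num
  · by_contra hcon
    push_neg at hcon
    refine GridRetr.main_contra f h3 hf ?_
    intro u v h
    have h1 := hcon u v h
    have h2 : (2 * ((gridBoundary m).coe.dist (f u) (f v)) : ℝ) < (m : ℝ) := by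
      push_cast at h1 ⊢
      linarith
    have h3' : 2 * ((gridBoundary m).coe.dist (f u) (f v)) < m := by
      exact_mod_cast h2
    omega
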